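/- Let σ, M, m, ħ > 0, w ≥ 0, x₀, x₀', v₀, v₀' ∈ ℝ³, let Ω_{x₀,v₀}(x) = (2πσ²)^{−3/4} exp(−|x−x₀|²/(4σ²)) exp((i/ħ) m x·v₀) be coherent states, and let K : ℝ³ × ℝ³ → ℂ be measurable with |K(x,y)| ≤ w for all x, y. Then the coherent-state matrix element of the damped kernel satisfies |∫∫_{ℝ³×ℝ³} conj(Ω_{x₀',v₀'}(x)) · exp(−(M²/(2σ²))|x−y|²) · K(x,y) · Ω_{x₀,v₀}(y) dx dy| ≤ (8πσ²/(1+4M²))^{3/2} · exp(−M²|x₀−x₀'|²/(2(1+4M²)σ²)) · w. In particular, for M ≥ 1/2 the matrix element between coherent states whose position labels satisfy |x₀−x₀'| ≫ σ is negligibly small, so after Galilean decoherence the statistical operator is sharply concentrated near the diagonal x₀ = x₀' in the coherent-state representation. -/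

import Mathlib

open MeasureTheory Real
open scoped RealInnerProductSpace ComplexConjugate

noncomputable section

abbrev E3 := EuclideanSpace ℝ (Fin 3)

/-- The (squeezed) coherent state with position label `x₀` and velocity label `v₀`. -/
noncomputable def coh (σ m hbar : ℝ) (x₀ v₀ : E3) (x : E3) : ℂ :=
  (((2 * Real.pi * σ ^ 2) ^ (-(3 : ℝ) / 4) : ℝ) : ℂ) *
    Complex.exp ((-‖x - x₀‖ ^ 2 / (4 * σ ^ 2) : ℝ) : ℂ) *
    Complex.exp ((Complex.I / (hbar : ℂ)) * (m : ℂ) * ((⟪x, v₀⟫ : ℝ) : ℂ))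

lemma abs_coh (σ m hbar : ℝ) (hσ : 0 < σ) (x₀ v₀ : E3) (x : E3) :
    ‖coh σ m hbar x₀ v₀ x‖
      = (2 * Real.pi * σ ^ 2) ^ (-(3 : ℝ) / 4) * Real.exp (-((4*σ^2)⁻¹ * ‖x - x₀‖ ^ 2)) := by
  unfold coh
  rw [norm_mul, norm_mul, Complex.norm_real, Real.norm_eq_abs, Complex.norm_exp, Complex.norm_exp]
  have h1 : ((Complex.I / (hbar : ℂ)) * (m : ℂ) * ((⟪x, v₀⟫ : ℝ) : ℂ)).re = 0 := by
    simp [Complex.div_re, Complex.mul_re]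
  rw [h1, Real.exp_zero, mul_one]
  have : |((2 * Real.pi * σ ^ 2) ^ (-(3 : ℝ) / 4) : ℝ)| = (2 * Real.pi * σ ^ 2) ^ (-(3 : ℝ) / 4) := by
    rw [abs_of_pos]; positivity
  rw [this, Complex.ofReal_re]
  congr 1
  ring

lemma quad_ident (a c : ℝ) (hac : a + c ≠ 0) (u v y : E3) :
    a * ‖y - u‖^2 + c * ‖y - v‖^2
      = (a+c) * ‖y - ((a/(a+c)) • u + (c/(a+c)) • v)‖^2 + (a*c/(a+c)) * ‖u - v‖^2 := by
  have e1 := norm_sub_sq_real y u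
  have e2 := norm_sub_sq_real y v
  have e3 := norm_sub_sq_real u v
  have e4 := norm_sub_sq_real y ((a/(a+c)) • u + (c/(a+c)) • v)
  have e5 : ‖(a/(a+c)) • u + (c/(a+c)) • v‖^2
      = (a/(a+c))^2 * ‖u‖^2 + 2*((a/(a+c))*(c/(a+c)))*⟪u,v⟫ + (c/(a+c))^2 * ‖v‖^2 := by
    rw [← real_inner_self_eq_norm_sq, inner_add_add_self]
    simp only [real_inner_smul_left, real_inner_smul_right, real_inner_self_eq_norm_sq,
      real_inner_comm v u, norm_smul, Real.norm_eq_abs, mul_pow, sq_abs]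
    ring
  have e6 : ⟪y, (a/(a+c)) • u + (c/(a+c)) • v⟫ = (a/(a+c)) * ⟪y,u⟫ + (c/(a+c)) * ⟪y,v⟫ := by
    rw [inner_add_right, real_inner_smul_right, real_inner_smul_right]
  rw [e1, e2, e3, e4, e5, e6]
  field_simp
  ring

lemma integrable_gauss {b : ℝ} (hb : 0 < b) (p : E3) :
    Integrable (fun y : E3 => Real.exp (-(b * ‖y - p‖^2))) := by
  have h : Integrable (fun y : E3 => Real.exp (-(b * ‖y‖^2))) := by
    have := (GaussianFourier.integrable_cexp_neg_mul_sq_norm_add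
      (b := (b : ℂ)) (V := E3) (by simpa using hb) 0 (0 : E3)).norm
    simpa [Complex.norm_exp, neg_mul, ← Complex.ofReal_pow,
      Complex.ofReal_re] using this
  simpa using h.comp_sub_right p

lemma integral_gauss {b : ℝ} (hb : 0 < b) (p : E3) :
    ∫ y : E3, Real.exp (-(b * ‖y - p‖^2)) = (π / b) ^ ((3:ℝ)/2) := by
  rw [integral_sub_right_eq_self (fun z : E3 => Real.exp (-(b * ‖z‖^2))) p]
  have h := GaussianFourier.integral_rexp_neg_mul_sq_norm (V := E3) hb
  simp only [neg_mul] at h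
  rw [h]
  norm_num [finrank_euclideanSpace_fin]

lemma gauss_split {a c : ℝ} (hs : 0 < a + c) (u v : E3) (y : E3) :
    Real.exp (-(a * ‖y - u‖^2) - c * ‖y - v‖^2)
      = Real.exp (-((a+c) * ‖y - ((a/(a+c)) • u + (c/(a+c)) • v)‖^2)) *
          Real.exp (-(a*c/(a+c)) * ‖u-v‖^2) := by
  rw [← Real.exp_add]
  congr 1
  have h := quad_ident a c hs.ne' u v y
  linarith

lemma gauss_prod_integrable {a c : ℝ} (ha : 0 < a) (hc : 0 < c) (u v : E3) :
    Integrable (fun y : E3 => Real.exp (-(a * ‖y - u‖^2) - c * ‖y - v‖^2)) := by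
  have hs : 0 < a + c := by positivity
  simp_rw [gauss_split hs u v]
  exact (integrable_gauss hs _).mul_const _

lemma gauss_prod {a c : ℝ} (ha : 0 < a) (hc : 0 < c) (u v : E3) :
    ∫ y : E3, Real.exp (-(a * ‖y - u‖^2) - c * ‖y - v‖^2)
      = (π/(a+c))^((3:ℝ)/2) * Real.exp (-(a*c/(a+c)) * ‖u-v‖^2) := by
  have hs : 0 < a + c := by positivity
  simp_rw [gauss_split hs u v]
  rw [integral_mul_const, integral_gauss hs]

lemma key (N w : ℝ) (hw : 0 ≤ w) {a b : ℝ} (ha : 0 < a) (hb : 0 < b)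
    (x₀ x₀' : E3) (F : E3 → E3 → ℂ)
    (hbound : ∀ x y, ‖F x y‖ ≤
      (N * Real.exp (-(a * ‖x - x₀'‖^2))) * Real.exp (-(b * ‖y - x‖^2)) * w *
        (N * Real.exp (-(a * ‖y - x₀‖^2)))) :
    ‖∫ x : E3, ∫ y : E3, F x y‖ ≤
      N^2 * w * (π/(b+a))^((3:ℝ)/2) * (π/(a + b*a/(b+a)))^((3:ℝ)/2) *
        Real.exp (-(a * (b*a/(b+a)) / (a + b*a/(b+a))) * ‖x₀' - x₀‖^2) := by
  set c : ℝ := b*a/(b+a) with hc'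
  have hc : 0 < c := by positivity
  have hac : 0 < a + c := by positivity
  set g : E3 → E3 → ℝ := fun x y =>
    (N * Real.exp (-(a * ‖x - x₀'‖^2))) * Real.exp (-(b * ‖y - x‖^2)) * w *
      (N * Real.exp (-(a * ‖y - x₀‖^2))) with hg
  have hgy : ∀ x y, g x y =
      (N^2 * w * Real.exp (-(a * ‖x - x₀'‖^2))) *
        Real.exp (-(b * ‖y - x‖^2) - a * ‖y - x₀‖^2) := by
    intro x y
    rw [hg]
    rw [show -(b * ‖y - x‖^2) - a * ‖y - x₀‖^2
        = -(b * ‖y - x‖^2) + -(a * ‖y - x₀‖^2) by ring, Real.exp_add]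
    ring
  set G : E3 → ℝ := fun x =>
    (N^2 * w * (π/(b+a))^((3:ℝ)/2)) *
      Real.exp (-(a * ‖x - x₀'‖^2) - c * ‖x - x₀‖^2) with hG
  have hGx : ∀ x, ∫ y : E3, g x y = G x := by
    intro x
    simp only [hgy]
    rw [MeasureTheory.integral_const_mul, gauss_prod hb ha x x₀]
    simp only [hG]
    rw [show (-(b*a/(b+a)) * ‖x - x₀‖^2 : ℝ) = -(c * ‖x - x₀‖^2) by rw [hc']; ring]
    rw [show -(a * ‖x - x₀'‖^2) - c * ‖x - x₀‖^2
        = -(a * ‖x - x₀'‖^2) + -(c * ‖x - x₀‖^2) by ring, Real.exp_add]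
    ring
  have hgint : ∀ x, Integrable (fun y => g x y) := by
    intro x
    simp only [hgy]
    exact (gauss_prod_integrable hb ha x x₀).const_mul _
  have hGint : Integrable G := by
    rw [hG]
    exact (gauss_prod_integrable ha hc x₀' x₀).const_mul _
  calc ‖∫ x : E3, ∫ y : E3, F x y‖
      = ‖∫ x : E3, ∫ y : E3, F x y‖ := rfl
    _ ≤ ∫ x : E3, ‖∫ y : E3, F x y‖ := norm_integral_le_integral_norm _
    _ ≤ ∫ x : E3, G x := by
        refine integral_mono_of_nonneg (ae_of_all _ fun x => norm_nonneg _) hGint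
          (ae_of_all _ fun x => ?_)
        calc ‖∫ y : E3, F x y‖ ≤ ∫ y : E3, ‖F x y‖ := norm_integral_le_integral_norm _
          _ ≤ ∫ y : E3, g x y := by
              refine integral_mono_of_nonneg (ae_of_all _ fun y => norm_nonneg _) (hgint x)
                (ae_of_all _ fun y => ?_)
              show ‖F x y‖ ≤ g x y
              exact hbound x y
          _ = G x := hGx x
    _ = N^2 * w * (π/(b+a))^((3:ℝ)/2) * (π/(a + c))^((3:ℝ)/2) *
          Real.exp (-(a * c / (a + c)) * ‖x₀' - x₀‖^2) := by
        simp only [hG]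
        rw [MeasureTheory.integral_const_mul, gauss_prod ha hc x₀' x₀]
        ring

/-- Bound on the coherent-state matrix element of a Gaussian-damped kernel:
after Galilean decoherence the statistical operator is sharply concentrated
near the diagonal `x₀ = x₀'` in the coherent-state representation. -/
theorem coherent_matrix_element_bound
    {σ M m hbar w : ℝ} (hσ : 0 < σ) (hM : 0 < M) (hm : 0 < m) (hhbar : 0 < hbar)
    (hw : 0 ≤ w) (x₀ x₀' v₀ v₀' : E3) (K : E3 × E3 → ℂ) (hmeas : Measurable K)
    (hbound : ∀ x y : E3, ‖K (x, y)‖ ≤ w) :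
    ‖(∫ x : E3, ∫ y : E3,
        conj (coh σ m hbar x₀' v₀' x) *
        Complex.exp ((-(M ^ 2 / (2 * σ ^ 2)) * ‖x - y‖ ^ 2 : ℝ) : ℂ) *
        K (x, y) * coh σ m hbar x₀ v₀ y)‖ ≤
    (8 * Real.pi * σ ^ 2 / (1 + 4 * M ^ 2)) ^ ((3 : ℝ) / 2) *
      Real.exp (-(M ^ 2 * ‖x₀ - x₀'‖ ^ 2) / (2 * (1 + 4 * M ^ 2) * σ ^ 2)) * w := by
  have hπ : (0:ℝ) < π := Real.pi_pos
  have ha : (0:ℝ) < (4*σ^2)⁻¹ := by positivity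
  have hb : (0:ℝ) < M^2/(2*σ^2) := by positivity
  have hbnd : ∀ x y : E3, ‖conj (coh σ m hbar x₀' v₀' x) *
        Complex.exp ((-(M ^ 2 / (2 * σ ^ 2)) * ‖x - y‖ ^ 2 : ℝ) : ℂ) *
        K (x, y) * coh σ m hbar x₀ v₀ y‖ ≤
      ((2*π*σ^2)^(-(3:ℝ)/4) * Real.exp (-((4*σ^2)⁻¹ * ‖x - x₀'‖^2))) *
        Real.exp (-((M^2/(2*σ^2)) * ‖y - x‖^2)) * w *
        ((2*π*σ^2)^(-(3:ℝ)/4) * Real.exp (-((4*σ^2)⁻¹ * ‖y - x₀‖^2))) := by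
    intro x y
    rw [norm_mul, norm_mul, norm_mul, Complex.norm_conj, abs_coh σ m hbar hσ x₀' v₀' x,
      abs_coh σ m hbar hσ x₀ v₀ y, Complex.norm_exp, Complex.ofReal_re]
    rw [show -(M ^ 2 / (2 * σ ^ 2)) * ‖x - y‖ ^ 2 = -((M^2/(2*σ^2)) * ‖y - x‖^2) by
      rw [norm_sub_rev]; ring]
    gcongr
    exact hbound x y
  have hkey := key ((2*π*σ^2)^(-(3:ℝ)/4)) w hw ha hb x₀ x₀' _ hbnd
  refine hkey.trans_eq ?_
  have hσ' : σ ≠ 0 := ne_of_gt hσ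
  have hba : (0:ℝ) < M^2/(2*σ^2) + (4*σ^2)⁻¹ := by positivity
  have hd2 : (0:ℝ) < (4*σ^2)⁻¹ + M^2/(2*σ^2) * (4*σ^2)⁻¹ / (M^2/(2*σ^2) + (4*σ^2)⁻¹) := by
    positivity
  have h14 : (0:ℝ) < 1 + 4*M^2 := by positivity
  have hexp : -((4*σ^2)⁻¹ * (M^2/(2*σ^2) * (4*σ^2)⁻¹ / (M^2/(2*σ^2) + (4*σ^2)⁻¹)) /
        ((4*σ^2)⁻¹ + M^2/(2*σ^2) * (4*σ^2)⁻¹ / (M^2/(2*σ^2) + (4*σ^2)⁻¹))) * ‖x₀' - x₀‖^2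
      = -(M^2 * ‖x₀ - x₀'‖^2) / (2*(1+4*M^2)*σ^2) := by
    rw [norm_sub_rev]
    have hq : (4*σ^2)⁻¹ * (M^2/(2*σ^2) * (4*σ^2)⁻¹ / (M^2/(2*σ^2) + (4*σ^2)⁻¹)) /
        ((4*σ^2)⁻¹ + M^2/(2*σ^2) * (4*σ^2)⁻¹ / (M^2/(2*σ^2) + (4*σ^2)⁻¹))
        = M^2 / (2*(1+4*M^2)*σ^2) := by
      have h1 := hba.ne'
      have h2 := hd2.ne'
      have h3 := h14.ne'
      field_simp
      ring
    rw [hq]; ring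
  have h2 : ((2*π*σ^2)^(-(3:ℝ)/4))^2 = ((2*π*σ^2)⁻¹)^((3:ℝ)/2) := by
    rw [← Real.rpow_natCast ((2*π*σ^2)^(-(3:ℝ)/4)) 2, ← Real.rpow_mul (by positivity),
      Real.inv_rpow (by positivity), ← Real.rpow_neg (by positivity)]
    norm_num
  have hpre : ((2*π*σ^2)⁻¹)^((3:ℝ)/2) * (π/(M^2/(2*σ^2)+(4*σ^2)⁻¹))^((3:ℝ)/2) *
      (π/((4*σ^2)⁻¹ + M^2/(2*σ^2)*(4*σ^2)⁻¹/(M^2/(2*σ^2)+(4*σ^2)⁻¹)))^((3:ℝ)/2)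
      = (8*π*σ^2/(1+4*M^2))^((3:ℝ)/2) := by
    rw [← Real.mul_rpow (by positivity) (by positivity),
      ← Real.mul_rpow (by positivity) (by positivity)]
    congr 1
    field_simp
    ring
  rw [hexp, h2, ← hpre]
  ring
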